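/- For every sequence of integers a_1, a_2, ..., a_n, ... and every positive integer n, the rational number n * Σ_{k=1}^{n} (1/k) * F^Δ(n,k) is an integer, where F^Δ(n,k) = Σ_{λ_1+...+λ_k=n, λ_i>0} a_{λ_1} a_{λ_2} ... a_{λ_k} is the sum, over all ordered compositions of n into exactly k positive parts, of the products of the corresponding terms of the sequence. -/

import Mathlib

/-- The compositae `F^Δ(n,k)`: the sum over all ordered compositions of `n` into
exactly `k` positive parts of the products `a (λ 1) * ... * a (λ k)`. -/
def compositae (a : ℕ → ℤ) (n k : ℕ) : ℤ :=
  ∑ c ∈ (Finset.Nat.antidiagonalTuple k n).filter (fun c => ∀ i, 0 < c i),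
    ∏ i, a (c i)

open Finset PowerSeries

lemma sum_tuple_succ {M : Type*} [AddCommMonoid M] (k n : ℕ) (f : (Fin (k+1) → ℕ) → M) :
    ∑ c ∈ Finset.Nat.antidiagonalTuple (k+1) n, f c
      = ∑ p ∈ Finset.HasAntidiagonal.antidiagonal n, ∑ c ∈ Finset.Nat.antidiagonalTuple k p.2,
          f (Fin.cons p.1 c) := by
  rw [Finset.sum_sigma']
  refine Finset.sum_nbij' (fun c => ⟨(c 0, ∑ i, Fin.tail c i), Fin.tail c⟩)
    (fun x => Fin.cons x.1.1 x.2) ?_ ?_ ?_ ?_ ?_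
  · intro c hc
    rw [Finset.Nat.mem_antidiagonalTuple] at hc
    simp only [Finset.mem_sigma, Finset.HasAntidiagonal.mem_antidiagonal, Finset.Nat.mem_antidiagonalTuple]
    refine ⟨?_, trivial⟩
    rw [← hc, Fin.sum_univ_succ]
    rfl
  · intro x hx
    rw [Finset.mem_sigma, Finset.HasAntidiagonal.mem_antidiagonal, Finset.Nat.mem_antidiagonalTuple] at hx
    rw [Finset.Nat.mem_antidiagonalTuple, Fin.sum_univ_succ]
    simp only [Fin.cons_zero, Fin.cons_succ]
    rw [show ∑ i : Fin k, x.2 i = x.1.2 from hx.2]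
    exact hx.1
  · intro c hc
    exact Fin.cons_self_tail c
  · intro x hx
    rw [Finset.mem_sigma, Finset.HasAntidiagonal.mem_antidiagonal, Finset.Nat.mem_antidiagonalTuple] at hx
    simp [Fin.cons_zero, Fin.tail_cons, hx.2]
  · intro c hc
    exact congrArg f (Fin.cons_self_tail c).symm

lemma coeff_pow_tuple (φ : PowerSeries ℤ) (k n : ℕ) :
    PowerSeries.coeff n (φ ^ k)
      = ∑ c ∈ Finset.Nat.antidiagonalTuple k n, ∏ i, PowerSeries.coeff (c i) φ := by
  induction k generalizing n with
  | zero =>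
    cases n with
    | zero => simp [Finset.Nat.antidiagonalTuple_zero_zero]
    | succ n => simp [Finset.Nat.antidiagonalTuple_zero_succ, coeff_one]
  | succ k ih =>
    rw [pow_succ', coeff_mul, sum_tuple_succ]
    refine Finset.sum_congr rfl fun p hp => ?_
    rw [ih, Finset.mul_sum]
    refine Finset.sum_congr rfl fun c hc => ?_
    rw [Fin.prod_univ_succ]
    simp

noncomputable def Aps (a : ℕ → ℤ) : PowerSeries ℤ :=
  PowerSeries.mk (fun m => if m = 0 then 0 else a m)

lemma compositae_eq_coeff (a : ℕ → ℤ) (n k : ℕ) :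
    compositae a n k = PowerSeries.coeff n ((Aps a) ^ k) := by
  rw [coeff_pow_tuple, compositae, Finset.sum_filter]
  refine Finset.sum_congr rfl fun c hc => ?_
  by_cases h : ∀ i, 0 < c i
  · rw [if_pos h]
    refine Finset.prod_congr rfl fun i _ => ?_
    rw [Aps, coeff_mk, if_neg (h i).ne']
  · rw [if_neg h]
    push_neg at h
    obtain ⟨i, hi⟩ := h
    refine (Finset.prod_eq_zero (Finset.mem_univ i) ?_).symm
    rw [Aps, coeff_mk, if_pos (by omega)]

lemma key (a : ℕ → ℤ) (n k : ℕ) (hk : k ≠ 0) (hn : n ≠ 0) :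
    (n : ℤ) * compositae a n k
      = k * ∑ i ∈ Finset.range n, compositae a i (k-1) * ((n - i : ℕ) * a (n - i)) := by
  obtain ⟨m, rfl⟩ : ∃ m, n = m + 1 := ⟨n - 1, by omega⟩
  have hd : PowerSeries.coeff m (d⁄dX ℤ ((Aps a) ^ k))
      = PowerSeries.coeff (m+1) ((Aps a)^k) * (m+1) := coeff_derivative _ m
  rw [Derivation.leibniz_pow] at hd
  rw [compositae_eq_coeff]
  have : (↑(m+1) : ℤ) * PowerSeries.coeff (m+1) ((Aps a)^k)
      = PowerSeries.coeff m ((k : ℕ) • (Aps a) ^ (k-1) • d⁄dX ℤ (Aps a)) := by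
    rw [hd]; push_cast; ring
  rw [this, map_nsmul, smul_eq_mul, nsmul_eq_mul, coeff_mul,
    Finset.Nat.sum_antidiagonal_eq_sum_range_succ_mk]
  congr 1
  refine Finset.sum_congr rfl fun i hi => ?_
  rw [Finset.mem_range] at hi
  rw [coeff_derivative, compositae_eq_coeff]
  have h1 : m - i + 1 = m + 1 - i := by omega
  have h2 : (Aps a).coeff (m + 1 - i) = a (m + 1 - i) := by
    rw [Aps, coeff_mk, if_neg (by omega)]
  rw [h1, h2]
  push_cast [Nat.sub_add_cancel, show i ≤ m + 1 by omega]
  ring_nf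
  rw [Nat.cast_sub (by omega)]
  ring

/-- For every integer sequence `a` and every positive integer `n`, the rational number
`n * Σ_{k=1}^{n} (1/k) * F^Δ(n,k)` is an integer. -/
theorem stmt_0 (a : ℕ → ℤ) (n : ℕ) (hn : 0 < n) :
    ∃ z : ℤ, (n : ℚ) * ∑ k ∈ Finset.Icc 1 n, (1 / (k : ℚ)) * (compositae a n k : ℚ) = z := by
  refine ⟨∑ k ∈ Finset.Icc 1 n, ∑ i ∈ Finset.range n,
    compositae a i (k-1) * ((n - i : ℕ) * a (n - i)), ?_⟩
  rw [Finset.mul_sum]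
  push_cast
  refine Finset.sum_congr rfl fun k hk => ?_
  have hk1 : 1 ≤ k := (Finset.mem_Icc.mp hk).1
  have hkey := key a n k (by omega) (by omega)
  have hkQ : (k : ℚ) ≠ 0 := by exact_mod_cast (by omega : (k:ℤ) ≠ 0)
  have hQ : (n : ℚ) * (compositae a n k : ℚ)
      = (k : ℚ) * ∑ i ∈ Finset.range n,
          (compositae a i (k-1) : ℚ) * ((n - i : ℕ) * a (n - i)) := by
    exact_mod_cast hkey
  calc (n : ℚ) * (1 / k * (compositae a n k : ℚ))
      = (1 / k) * ((n : ℚ) * compositae a n k) := by ring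
    _ = (1 / k) * ((k : ℚ) * ∑ i ∈ Finset.range n,
          (compositae a i (k-1) : ℚ) * ((n - i : ℕ) * a (n - i))) := by rw [hQ]
    _ = ∑ i ∈ Finset.range n,
          (compositae a i (k-1) : ℚ) * ((n - i : ℕ) * a (n - i)) := by
        field_simp
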